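/- For all positive integers m and n, the maximum nullity of the Hopi rectangle graph HD(m,n) satisfies M(HD(m,n)) ≥ m + n. -/

import Mathlib

/-- `A` is a real symmetric matrix whose off-diagonal nonzero pattern is the
adjacency of `G` (diagonal entries are unconstrained). -/
def CompatMatrix {V : Type*} [Fintype V] (G : SimpleGraph V) (A : Matrix V V ℝ) : Prop :=
  A.IsSymm ∧ ∀ i j : V, i ≠ j → (A i j ≠ 0 ↔ G.Adj i j)

/-- The minimum rank `mr(G)` of a graph. -/
noncomputable def minRank {V : Type*} [Fintype V] (G : SimpleGraph V) : ℕ :=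
  sInf {r | ∃ A : Matrix V V ℝ, CompatMatrix G A ∧ A.rank = r}

/-- The maximum nullity `M(G)` of a graph, where the nullity of an `n × n`
matrix `A` is `n - rank A`. -/
noncomputable def maxNullity {V : Type*} [Fintype V] (G : SimpleGraph V) : ℕ :=
  sSup {k | ∃ A : Matrix V V ℝ, CompatMatrix G A ∧ Fintype.card V - A.rank = k}

/-- The vertex set of the Hopi rectangle graph of order `(m,n)`: the set of
integer lattice points `(i,j)` with `m-1 ≤ i+j ≤ 2n+m-1` and `|i-j| ≤ m`
(realized as a `Finset` by filtering a sufficiently large box). -/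
noncomputable def HDverts (m n : ℕ) : Finset (ℤ × ℤ) :=
  (Finset.Icc (-2 : ℤ) (2*n + 2*m) ×ˢ Finset.Icc (-2 : ℤ) (2*n + 2*m)).filter
    (fun p => (m : ℤ) - 1 ≤ p.1 + p.2 ∧ p.1 + p.2 ≤ 2*n + m - 1 ∧ |p.1 - p.2| ≤ m)

/-- The Hopi rectangle graph `HD(m,n)`: vertices are the points of `HDverts m n`,
and `(i,j)` is adjacent to `(i',j')` iff `|i - i'| + |j - j'| = 1`. -/
def HD (m n : ℕ) : SimpleGraph {p : ℤ × ℤ // p ∈ HDverts m n} where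
  Adj u v := |u.val.1 - v.val.1| + |u.val.2 - v.val.2| = 1
  symm := by
    constructor
    intro u v h
    rw [abs_sub_comm v.val.1 u.val.1, abs_sub_comm v.val.2 u.val.2]
    exact h
  loopless := by constructor; intro u h; simp at h

/-! ### Auxiliary constructions -/

/-- A sign function: `1` if `t ≡ 0 (mod 4)`, `-1` otherwise (used on even inputs,
where it alternates with period `2` along an even progression). -/
def sg (t : ℤ) : ℝ := if t % 4 = 0 then 1 else -1

lemma sg_ne_zero (t : ℤ) : sg t ≠ 0 := by
  unfold sg; split <;> norm_num

lemma sg_add_two {t : ℤ} (ht : t % 2 = 0) : sg t + sg (t + 2) = 0 := by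
  unfold sg
  rcases (by omega : t % 4 = 0 ∨ t % 4 = 2) with h | h
  · rw [if_pos h, if_neg (by omega)]; ring
  · rw [if_neg (by omega), if_pos (by omega)]; ring

/-- The candidate null vectors of the adjacency matrix of `HD(m,n)`, defined on
all of `ℤ × ℤ`.  The `inl t` vectors are supported on the diagonal
`i - j = -m + 1 + 2t` and alternate in sign along it; the `inr k` vectors are
supported on the antidiagonal `i + j = m + 2k` and alternate along it. -/
def Wfun (m n : ℕ) (idx : Fin m ⊕ Fin n) (p : ℤ × ℤ) : ℝ :=
  match idx with
  | Sum.inl t => if p.1 - p.2 = -(m : ℤ) + 1 + 2 * t.1 then sg (p.1 + p.2 - m + 1) else 0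
  | Sum.inr k => if p.1 + p.2 = (m : ℤ) + 2 * k.1 then sg (p.1 - p.2 + m) else 0

/-- The adjacency matrix of `HD(m,n)` (all edge weights `1`, zero diagonal). -/
def Amat (m n : ℕ) : Matrix {p : ℤ × ℤ // p ∈ HDverts m n} {p : ℤ × ℤ // p ∈ HDverts m n} ℝ :=
  fun u v => if |u.val.1 - v.val.1| + |u.val.2 - v.val.2| = 1 then 1 else 0

lemma mem_HDverts {m n : ℕ} {p : ℤ × ℤ} :
    p ∈ HDverts m n ↔
      (-2 ≤ p.1 ∧ p.1 ≤ 2*n + 2*m) ∧ (-2 ≤ p.2 ∧ p.2 ≤ 2*n + 2*m) ∧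
      (m : ℤ) - 1 ≤ p.1 + p.2 ∧ p.1 + p.2 ≤ 2*n + m - 1 ∧
      p.1 - p.2 ≤ m ∧ -(m : ℤ) ≤ p.1 - p.2 := by
  simp only [HDverts, Finset.mem_filter, Finset.mem_product, Finset.mem_Icc, abs_le]
  constructor
  · rintro ⟨⟨⟨h1, h2⟩, h3, h4⟩, h5, h6, h7, h8⟩
    exact ⟨⟨h1, h2⟩, ⟨h3, h4⟩, h5, h6, h8, h7⟩
  · rintro ⟨⟨h1, h2⟩, ⟨h3, h4⟩, h5, h6, h7, h8⟩
    exact ⟨⟨⟨h1, h2⟩, h3, h4⟩, h5, h6, h8, h7⟩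

lemma compat_Amat (m n : ℕ) : CompatMatrix (HD m n) (Amat m n) := by
  constructor
  · apply Matrix.IsSymm.ext
    intro u v
    unfold Amat
    rw [abs_sub_comm v.val.1 u.val.1, abs_sub_comm v.val.2 u.val.2]
  · intro u v _
    show (if |u.val.1 - v.val.1| + |u.val.2 - v.val.2| = 1 then (1:ℝ) else 0) ≠ 0 ↔
      |u.val.1 - v.val.1| + |u.val.2 - v.val.2| = 1
    split <;> simp_all

/-- Product of two indicators vanishes when the conjunction fails. -/
lemma term_zero {P Q : Prop} [Decidable P] [Decidable Q] {r : ℝ} (h : ¬(P ∧ Q)) :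
    (if P then (1:ℝ) else 0) * (if Q then r else 0) = 0 := by
  by_cases hp : P
  · rw [if_pos hp, if_neg (fun hq => h ⟨hp, hq⟩), mul_zero]
  · rw [if_neg hp, zero_mul]

lemma term_eval {P Q : Prop} [Decidable P] [Decidable Q] {r : ℝ} (hp : P) (hq : Q) :
    (if P then (1:ℝ) else 0) * (if Q then r else 0) = r := by
  rw [if_pos hp, if_pos hq, one_mul]

/-- A sum vanishes if all terms vanish except two that cancel. -/
lemma sum_pair_cancel {α : Type*} [DecidableEq α] {s : Finset α} {F : α → ℝ} {q1 q2 : α}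
    (hq1 : q1 ∈ s) (hq2 : q2 ∈ s) (hne : q1 ≠ q2)
    (hzero : ∀ q ∈ s, q ≠ q1 → q ≠ q2 → F q = 0)
    (hcancel : F q1 + F q2 = 0) : ∑ q ∈ s, F q = 0 := by
  have hsub : ({q1, q2} : Finset α) ⊆ s := by
    intro x hx
    rcases Finset.mem_insert.mp hx with rfl | hx
    · exact hq1
    · rw [Finset.mem_singleton] at hx; subst hx; exact hq2
  rw [← Finset.sum_subset hsub ?_]
  · rw [Finset.sum_pair hne]; exact hcancel
  · intro x hx hnx
    simp only [Finset.mem_insert, Finset.mem_singleton, not_or] at hnx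
    exact hzero x hx hnx.1 hnx.2

lemma mulVec_Wfun (m n : ℕ) (idx : Fin m ⊕ Fin n) :
    (Amat m n).mulVec (fun p => Wfun m n idx p.val) = 0 := by
  funext p
  obtain ⟨⟨a, b⟩, hp⟩ := p
  have hp' := mem_HDverts.mp hp
  simp only [Prod.fst, Prod.snd] at hp'
  show ∑ q : {p : ℤ × ℤ // p ∈ HDverts m n},
      Amat m n ⟨(a, b), hp⟩ q * Wfun m n idx q.val = (0 : ℝ)
  have hrw : ∀ q : {p : ℤ × ℤ // p ∈ HDverts m n},
      Amat m n ⟨(a, b), hp⟩ q * Wfun m n idx q.val =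
      (fun z : ℤ × ℤ =>
        (if |a - z.1| + |b - z.2| = 1 then (1:ℝ) else 0) * Wfun m n idx z) q.val := by
    intro q; rfl
  rw [Finset.sum_congr rfl (fun q _ => hrw q),
    ← Finset.sum_subtype (HDverts m n) (fun _ => Iff.rfl)
      (fun z : ℤ × ℤ => (if |a - z.1| + |b - z.2| = 1 then (1:ℝ) else 0) * Wfun m n idx z)]
  cases idx with
  | inl t =>
    have ht : (t.1 : ℤ) < m := by exact_mod_cast t.2
    by_cases h1 : a - b = -(m : ℤ) + 1 + 2 * t.1 + 1
    · apply sum_pair_cancel (q1 := (a - 1, b)) (q2 := (a, b + 1))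
      · rw [mem_HDverts]; dsimp only; omega
      · rw [mem_HDverts]; dsimp only; omega
      · intro hq; rw [Prod.mk.injEq] at hq; omega
      · rintro ⟨x, y⟩ hq hne1 hne2
        rw [Ne, Prod.mk.injEq, not_and_or] at hne1 hne2
        dsimp only [Wfun]
        apply term_zero
        rintro ⟨hadj, hcond⟩
        rw [Int.abs_eq_natAbs, Int.abs_eq_natAbs] at hadj
        omega
      · dsimp only [Wfun]
        rw [term_eval (by rw [Int.abs_eq_natAbs, Int.abs_eq_natAbs]; omega) (by omega),
            term_eval (by rw [Int.abs_eq_natAbs, Int.abs_eq_natAbs]; omega) (by omega)]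
        rw [show a - 1 + b - (m:ℤ) + 1 = a + b - m by ring,
            show a + (b + 1) - (m:ℤ) + 1 = (a + b - m) + 2 by ring]
        exact sg_add_two (by omega)
    · by_cases h2 : a - b = -(m : ℤ) + 1 + 2 * t.1 - 1
      · apply sum_pair_cancel (q1 := (a, b - 1)) (q2 := (a + 1, b))
        · rw [mem_HDverts]; dsimp only; omega
        · rw [mem_HDverts]; dsimp only; omega
        · intro hq; rw [Prod.mk.injEq] at hq; omega
        · rintro ⟨x, y⟩ hq hne1 hne2
          rw [Ne, Prod.mk.injEq, not_and_or] at hne1 hne2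
          dsimp only [Wfun]
          apply term_zero
          rintro ⟨hadj, hcond⟩
          rw [Int.abs_eq_natAbs, Int.abs_eq_natAbs] at hadj
          omega
        · dsimp only [Wfun]
          rw [term_eval (by rw [Int.abs_eq_natAbs, Int.abs_eq_natAbs]; omega) (by omega),
              term_eval (by rw [Int.abs_eq_natAbs, Int.abs_eq_natAbs]; omega) (by omega)]
          rw [show a + (b - 1) - (m:ℤ) + 1 = a + b - m by ring,
              show a + 1 + b - (m:ℤ) + 1 = (a + b - m) + 2 by ring]
          exact sg_add_two (by omega)
      · apply Finset.sum_eq_zero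
        rintro ⟨x, y⟩ hq
        dsimp only [Wfun]
        apply term_zero
        rintro ⟨hadj, hcond⟩
        rw [Int.abs_eq_natAbs, Int.abs_eq_natAbs] at hadj
        omega
  | inr k =>
    have hk : (k.1 : ℤ) < n := by exact_mod_cast k.2
    by_cases h1 : a + b = (m : ℤ) + 2 * k.1 + 1
    · apply sum_pair_cancel (q1 := (a - 1, b)) (q2 := (a, b - 1))
      · rw [mem_HDverts]; dsimp only; omega
      · rw [mem_HDverts]; dsimp only; omega
      · intro hq; rw [Prod.mk.injEq] at hq; omega
      · rintro ⟨x, y⟩ hq hne1 hne2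
        rw [Ne, Prod.mk.injEq, not_and_or] at hne1 hne2
        dsimp only [Wfun]
        apply term_zero
        rintro ⟨hadj, hcond⟩
        rw [Int.abs_eq_natAbs, Int.abs_eq_natAbs] at hadj
        omega
      · dsimp only [Wfun]
        rw [term_eval (by rw [Int.abs_eq_natAbs, Int.abs_eq_natAbs]; omega) (by omega),
            term_eval (by rw [Int.abs_eq_natAbs, Int.abs_eq_natAbs]; omega) (by omega)]
        rw [show a - 1 - b + (m:ℤ) = a - b + m - 1 by ring,
            show a - (b - 1) + (m:ℤ) = (a - b + m - 1) + 2 by ring]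
        exact sg_add_two (by omega)
    · by_cases h2 : a + b = (m : ℤ) + 2 * k.1 - 1
      · apply sum_pair_cancel (q1 := (a + 1, b)) (q2 := (a, b + 1))
        · rw [mem_HDverts]; dsimp only; omega
        · rw [mem_HDverts]; dsimp only; omega
        · intro hq; rw [Prod.mk.injEq] at hq; omega
        · rintro ⟨x, y⟩ hq hne1 hne2
          rw [Ne, Prod.mk.injEq, not_and_or] at hne1 hne2
          dsimp only [Wfun]
          apply term_zero
          rintro ⟨hadj, hcond⟩
          rw [Int.abs_eq_natAbs, Int.abs_eq_natAbs] at hadj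
          omega
        · dsimp only [Wfun]
          rw [term_eval (by rw [Int.abs_eq_natAbs, Int.abs_eq_natAbs]; omega) (by omega),
              term_eval (by rw [Int.abs_eq_natAbs, Int.abs_eq_natAbs]; omega) (by omega)]
          rw [show a + 1 - b + (m:ℤ) = a - b + m + 1 by ring,
              show a - (b + 1) + (m:ℤ) = a - b + m - 1 by ring,
              show a - b + (m:ℤ) + 1 = (a - b + m - 1) + 2 by ring]
          rw [add_comm]
          exact sg_add_two (by omega)
      · apply Finset.sum_eq_zero
        rintro ⟨x, y⟩ hq
        dsimp only [Wfun]
        apply term_zero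
        rintro ⟨hadj, hcond⟩
        rw [Int.abs_eq_natAbs, Int.abs_eq_natAbs] at hadj
        omega

lemma Wfun_linindep (m n : ℕ) (hm : 0 < m) (hn : 0 < n) :
    LinearIndependent ℝ
      (fun idx => (fun p : {p : ℤ × ℤ // p ∈ HDverts m n} => Wfun m n idx p.val)) := by
  rw [Fintype.linearIndependent_iff]
  intro g hg idx
  cases idx with
  | inl t =>
    have ht : (t.1 : ℤ) < m := by exact_mod_cast t.2
    have hmem : (((t.1 : ℤ)), (m : ℤ) - 1 - t.1) ∈ HDverts m n := by
      rw [mem_HDverts]; dsimp only; omega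
    have h0 := congrFun hg ⟨_, hmem⟩
    simp only [Finset.sum_apply, Pi.smul_apply, smul_eq_mul, Pi.zero_apply] at h0
    rw [Finset.sum_eq_single (Sum.inl t)] at h0
    · dsimp only [Wfun] at h0
      rw [if_pos (by ring)] at h0
      rcases mul_eq_zero.mp h0 with h | h
      · exact h
      · exact absurd h (sg_ne_zero _)
    · intro b _ hb
      cases b with
      | inl t' =>
        have ht' : (t'.1 : ℤ) < m := by exact_mod_cast t'.2
        have htt' : t'.1 ≠ t.1 := fun h => hb (by rw [Sum.inl.injEq]; exact Fin.val_injective h)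
        have htt'' : (t'.1 : ℤ) ≠ (t.1 : ℤ) := by exact_mod_cast htt'
        dsimp only [Wfun]
        rw [if_neg (by omega), mul_zero]
      | inr k' =>
        dsimp only [Wfun]
        rw [if_neg (by omega), mul_zero]
    · intro h; exact absurd (Finset.mem_univ _) h
  | inr k =>
    have hk : (k.1 : ℤ) < n := by exact_mod_cast k.2
    have hmem : (((m : ℤ) + k.1), ((k.1 : ℤ))) ∈ HDverts m n := by
      rw [mem_HDverts]; dsimp only; omega
    have h0 := congrFun hg ⟨_, hmem⟩
    simp only [Finset.sum_apply, Pi.smul_apply, smul_eq_mul, Pi.zero_apply] at h0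
    rw [Finset.sum_eq_single (Sum.inr k)] at h0
    · dsimp only [Wfun] at h0
      rw [if_pos (by ring)] at h0
      rcases mul_eq_zero.mp h0 with h | h
      · exact h
      · exact absurd h (sg_ne_zero _)
    · intro b _ hb
      cases b with
      | inl t' =>
        have ht' : (t'.1 : ℤ) < m := by exact_mod_cast t'.2
        dsimp only [Wfun]
        rw [if_neg (by omega), mul_zero]
      | inr k' =>
        have hkk' : k'.1 ≠ k.1 := fun h => hb (by rw [Sum.inr.injEq]; exact Fin.val_injective h)
        have hkk'' : (k'.1 : ℤ) ≠ (k.1 : ℤ) := by exact_mod_cast hkk'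
        dsimp only [Wfun]
        rw [if_neg (by omega), mul_zero]
    · intro h; exact absurd (Finset.mem_univ _) h

/-- The maximum nullity of `HD(m,n)` is at least `m + n`. -/
theorem maxNullity_HD_ge (m n : ℕ) (hm : 0 < m) (hn : 0 < n) :
    m + n ≤ maxNullity (HD m n) := by
  classical
  set K := LinearMap.ker (Amat m n).mulVecLin with hK
  have hker : ∀ idx : Fin m ⊕ Fin n,
      (fun p : {p : ℤ × ℤ // p ∈ HDverts m n} => Wfun m n idx p.val) ∈ K := by
    intro idx
    rw [hK, LinearMap.mem_ker, Matrix.mulVecLin_apply]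
    exact mulVec_Wfun m n idx
  have hli : LinearIndependent ℝ (fun idx : Fin m ⊕ Fin n =>
      (⟨_, hker idx⟩ : K)) := by
    apply LinearIndependent.of_comp K.subtype
    exact Wfun_linindep m n hm hn
  have hdim : m + n ≤ Module.finrank ℝ K := by
    have := hli.fintype_card_le_finrank
    simpa using this
  have hrank : (Amat m n).rank + Module.finrank ℝ K =
      Fintype.card {p : ℤ × ℤ // p ∈ HDverts m n} := by
    rw [Matrix.rank, hK, LinearMap.finrank_range_add_finrank_ker]
    simp [Module.finrank_fintype_fun_eq_card]
  have key : m + n ≤ Fintype.card {p : ℤ × ℤ // p ∈ HDverts m n} - (Amat m n).rank := by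
    omega
  refine le_trans key (le_csSup ?_ ?_)
  · refine ⟨Fintype.card {p : ℤ × ℤ // p ∈ HDverts m n}, ?_⟩
    rintro x ⟨A, _, hA⟩
    omega
  · exact ⟨Amat m n, compat_Amat m n, rfl⟩
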